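/- (Theorem 1) Let M = (I, O, Q, q_init, δ, λ) be an IGMM in which every state is reachable from q_init by a finite sequence of δ-transitions, and let S = {C_0, …, C_{n-1}} be a set of subsets of Q of minimal cardinality among sets that are closed, cover M, and all of whose members have nonempty output. Define the IGMM M' = (I, O, S, q'_init, δ', λ') where q'_init is any C ∈ S with q_init ∈ C; for each C_j ∈ S and i ∈ 𝔹^I, if Succ(C_j,i) ≠ ∅ then δ'(C_j,i) is any C_k ∈ S with Succ(C_j,i) ⊆ C_k and λ'(C_j,i) = Out(C_j,i), while if Succ(C_j,i) = ∅ then δ'(C_j,i) is undefined and λ'(C_j,i) = 𝔹^O. Then M' is a specialization of M of minimal size: M' is a specialization of M, and every IGMM over I and O that is a specialization of M has at least n states. -/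

import Mathlib

/-- An incompletely specified generalized Mealy machine (IGMM) over input
propositions `I`, output propositions `O`, with state set `Q`.
Input valuations are `I → Bool`, output valuations are `O → Bool`.
`delta` is the partial transition function, `lam` the output function. -/
structure IGMM (I O Q : Type*) where
  init : Q
  delta : Q → (I → Bool) → Option Q
  lam : Q → (I → Bool) → Set (O → Bool)
  lam_nonempty : ∀ q i, (lam q i).Nonempty
  lam_top : ∀ q i, delta q i = none → lam q i = Set.univ

namespace IGMM

/-- `(ι, o) ⊨ M_q` : either an infinite run, or a finite run ending where `delta`
is undefined. -/
def Sat {I O Q : Type*} (M : IGMM I O Q) (q : Q) (ι : ℕ → I → Bool)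
    (o : ℕ → O → Bool) : Prop :=
  (∃ qs : ℕ → Q, qs 0 = q ∧
      ∀ j : ℕ, M.delta (qs j) (ι j) = some (qs (j + 1)) ∧ o j ∈ M.lam (qs j) (ι j)) ∨
  (∃ (k : ℕ) (qs : ℕ → Q), qs 0 = q ∧
      (∀ j < k, M.delta (qs j) (ι j) = some (qs (j + 1)) ∧ o j ∈ M.lam (qs j) (ι j)) ∧
      M.delta (qs k) (ι k) = none)

/-- The behaviour set `Beh_M(q, ι) = {o | (ι, o) ⊨ M_q}`. -/
def Beh {I O Q : Type*} (M : IGMM I O Q) (q : Q) (ι : ℕ → I → Bool) :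
    Set (ℕ → O → Bool) :=
  {o | M.Sat q ι o}

end IGMM

/-- `q' ⊑ q` : the state `q'` of `M'` is a specialization of the state `q` of `M`. -/
def IGMM.Specializes {I O Q' Q : Type*} (M' : IGMM I O Q') (q' : Q')
    (M : IGMM I O Q) (q : Q) : Prop :=
  ∀ ι : ℕ → I → Bool, M'.Beh q' ι ⊆ M.Beh q ι

/-- `q' ≈ q` : the state `q'` of `M'` is a variation of the state `q` of `M`. -/
def IGMM.IsVariation {I O Q' Q : Type*} (M' : IGMM I O Q') (q' : Q')
    (M : IGMM I O Q) (q : Q) : Prop :=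
  ∀ ι : ℕ → I → Bool, (M'.Beh q' ι ∩ M.Beh q ι).Nonempty

namespace IGMM

/-- `Succ(C, i)`: successors of the states of `C` under input `i`. -/
def Succ {I O Q : Type*} (M : IGMM I O Q) (C : Set Q) (i : I → Bool) : Set Q :=
  {p | ∃ q ∈ C, M.delta q i = some p}

/-- `Out(C, i) = ⋂_{q ∈ C} λ(q, i)`. -/
def Out {I O Q : Type*} (M : IGMM I O Q) (C : Set Q) (i : I → Bool) :
    Set (O → Bool) :=
  ⋂ q ∈ C, M.lam q i

/-- `S` covers `M`: every state belongs to some member of `S`. -/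
def Covers {I O Q : Type*} (M : IGMM I O Q) (S : Set (Set Q)) : Prop :=
  ∀ q : Q, ∃ C ∈ S, q ∈ C

/-- `S` is closed: the successors of each member under each input are contained
in some member. -/
def SuccClosed {I O Q : Type*} (M : IGMM I O Q) (S : Set (Set Q)) : Prop :=
  ∀ C ∈ S, ∀ i : I → Bool, ∃ C' ∈ S, M.Succ C i ⊆ C'

/-- `C` has nonempty output: `Out(C, i) ≠ ∅` for every input `i`. -/
def NonemptyOutput {I O Q : Type*} (M : IGMM I O Q) (C : Set Q) : Prop :=
  ∀ i : I → Bool, (M.Out C i).Nonempty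

end IGMM

/-- `q'` is reachable from `q` by a finite sequence of `δ`-transitions. -/
def IGMM.Reaches {I O Q : Type*} (M : IGMM I O Q) : Q → Q → Prop :=
  Relation.ReflTransGen fun a b => ∃ i : I → Bool, M.delta a i = some b

namespace IGMM

variable {I O Q Q'' : Type*}

/-- Greedy run of `M` from `q` on input `ι`, staying put when `delta` is undefined. -/
def grun (M : IGMM I O Q) (q : Q) (ι : ℕ → I → Bool) : ℕ → Q
  | 0 => q
  | j + 1 => (M.delta (M.grun q ι j) (ι j)).getD (M.grun q ι j)

lemma sat_of_greedy (M : IGMM I O Q) (q : Q) (ι : ℕ → I → Bool) (o : ℕ → O → Bool)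
    (ho : ∀ j, (∀ j' ≤ j, (M.delta (M.grun q ι j') (ι j')).isSome) →
      o j ∈ M.lam (M.grun q ι j) (ι j)) : M.Sat q ι o := by
  classical
  by_cases h : ∀ j, (M.delta (M.grun q ι j) (ι j)).isSome
  · left
    refine ⟨M.grun q ι, rfl, fun j => ⟨?_, ho j (fun _ _ => h _)⟩⟩
    obtain ⟨p, hp⟩ := Option.isSome_iff_exists.mp (h j)
    show M.delta (M.grun q ι j) (ι j)
        = some ((M.delta (M.grun q ι j) (ι j)).getD (M.grun q ι j))
    rw [hp]; rfl
  · push_neg at h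
    have hex : ∃ j, ¬(M.delta (M.grun q ι j) (ι j)).isSome = true := by
      obtain ⟨j0, hj0⟩ := h
      exact ⟨j0, by simpa using hj0⟩
    have hsome : ∀ j < Nat.find hex, (M.delta (M.grun q ι j) (ι j)).isSome := by
      intro j hj
      by_contra hc
      have h2 : Nat.find hex ≤ j := Nat.find_le hc
      omega
    right
    refine ⟨Nat.find hex, M.grun q ι, rfl, fun j hj => ?_, ?_⟩
    · refine ⟨?_, ho j (fun j' hj' => hsome j' (lt_of_le_of_lt hj' hj))⟩
      obtain ⟨p, hp⟩ := Option.isSome_iff_exists.mp (hsome j hj)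
      show M.delta (M.grun q ι j) (ι j)
          = some ((M.delta (M.grun q ι j) (ι j)).getD (M.grun q ι j))
      rw [hp]; rfl
    · exact Option.not_isSome_iff_eq_none.mp (Nat.find_spec hex)

lemma beh_nonempty (M : IGMM I O Q) (q : Q) (ι : ℕ → I → Bool) :
    ∃ o : ℕ → O → Bool, M.Sat q ι o := by
  refine ⟨fun j => (M.lam_nonempty (M.grun q ι j) (ι j)).choose,
    M.sat_of_greedy q ι _ (fun j _ => ?_)⟩
  exact (M.lam_nonempty (M.grun q ι j) (ι j)).choose_spec

lemma sat_of_none {M : IGMM I O Q} {q : Q} {ι : ℕ → I → Bool} {o : ℕ → O → Bool}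
    (h : M.delta q (ι 0) = none) : M.Sat q ι o :=
  Or.inr ⟨0, fun _ => q, rfl, fun j hj => absurd hj (Nat.not_lt_zero j), h⟩

lemma sat_step_some {M : IGMM I O Q} {q p : Q} {ι : ℕ → I → Bool} {o : ℕ → O → Bool}
    (hp : M.delta q (ι 0) = some p) (h : M.Sat q ι o) :
    o 0 ∈ M.lam q (ι 0) ∧ M.Sat p (fun n => ι (n + 1)) (fun n => o (n + 1)) := by
  rcases h with ⟨qs, hq0, hrun⟩ | ⟨k, qs, hq0, hrun, hend⟩
  · obtain ⟨hd0, ho0⟩ := hrun 0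
    rw [hq0] at hd0 ho0
    have hqs1 : qs 1 = p := by rw [hp] at hd0; exact (Option.some_inj.mp hd0).symm
    exact ⟨ho0, Or.inl ⟨fun n => qs (n + 1), hqs1, fun j => hrun (j + 1)⟩⟩
  · cases k with
    | zero => rw [hq0, hp] at hend; simp at hend
    | succ k' =>
      obtain ⟨hd0, ho0⟩ := hrun 0 (Nat.succ_pos _)
      rw [hq0] at hd0 ho0
      have hqs1 : qs 1 = p := by rw [hp] at hd0; exact (Option.some_inj.mp hd0).symm
      exact ⟨ho0, Or.inr ⟨k', fun n => qs (n + 1), hqs1,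
        fun j hj => hrun (j + 1) (Nat.succ_lt_succ hj), hend⟩⟩

lemma sat_cons {M : IGMM I O Q} {q p : Q} {ι : ℕ → I → Bool} {o : ℕ → O → Bool}
    (hp : M.delta q (ι 0) = some p) (ho : o 0 ∈ M.lam q (ι 0))
    (h : M.Sat p (fun n => ι (n + 1)) (fun n => o (n + 1))) : M.Sat q ι o := by
  rcases h with ⟨qs, hq0, hrun⟩ | ⟨k, qs, hq0, hrun, hend⟩
  · refine Or.inl ⟨fun n => Nat.casesOn n q qs, rfl, fun j => ?_⟩
    cases j with
    | zero => exact ⟨show M.delta q (ι 0) = some (qs 0) by rw [hq0]; exact hp, ho⟩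
    | succ j => exact hrun j
  · refine Or.inr ⟨k + 1, fun n => Nat.casesOn n q qs, rfl, fun j hj => ?_, hend⟩
    cases j with
    | zero => exact ⟨show M.delta q (ι 0) = some (qs 0) by rw [hq0]; exact hp, ho⟩
    | succ j => exact hrun j (Nat.lt_of_succ_lt_succ hj)

lemma univ_step {M : IGMM I O Q} {q p : Q} {i : I → Bool}
    (hu : ∀ ι o, M.Sat q ι o) (hq : M.delta q i = some p) :
    ∀ ι o, M.Sat p ι o := by
  intro ι o
  have h := hu (fun n => Nat.casesOn n i ι) (fun n => Nat.casesOn n (fun _ => true) o)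
  exact (sat_step_some hq h).2

lemma univ_lam {M : IGMM I O Q} {q : Q} {i : I → Bool} {o0 : O → Bool}
    (hu : ∀ ι o, M.Sat q ι o) : o0 ∈ M.lam q i := by
  cases hq : M.delta q i with
  | none => rw [M.lam_top q i hq]; trivial
  | some p =>
    have h := hu (fun n => Nat.casesOn n i (fun _ _ => true))
      (fun n => Nat.casesOn n o0 (fun _ _ => true))
    exact (sat_step_some hq h).1

lemma spec_step {M : IGMM I O Q} {M'' : IGMM I O Q''} {r p'' : Q''} {q p : Q} {i : I → Bool}
    (hs : M''.Specializes r M q) (hq : M.delta q i = some p)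
    (hr : M''.delta r i = some p'') : M''.Specializes p'' M p := by
  intro ι o ho
  obtain ⟨o0, ho0⟩ := M''.lam_nonempty r i
  have h1 : M''.Sat r (fun n => Nat.casesOn n i ι) (fun n => Nat.casesOn n o0 o) :=
    sat_cons hr ho0 ho
  exact (sat_step_some hq (hs _ h1)).2

lemma spec_none {M : IGMM I O Q} {M'' : IGMM I O Q''} {r : Q''} {q p : Q} {i : I → Bool}
    (hs : M''.Specializes r M q) (hq : M.delta q i = some p)
    (hr : M''.delta r i = none) : ∀ ι o, M.Sat p ι o := by
  intro ι o
  have h1 : M''.Sat r (fun n => Nat.casesOn n i ι)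
      (fun n => Nat.casesOn n (fun _ => true) o) := sat_of_none hr
  exact (sat_step_some hq (hs _ h1)).2

lemma spec_lam {M : IGMM I O Q} {M'' : IGMM I O Q''} {r : Q''} {q : Q} {i : I → Bool}
    {o0 : O → Bool} (hs : M''.Specializes r M q) (h0 : o0 ∈ M''.lam r i) :
    o0 ∈ M.lam q i := by
  cases hq : M.delta q i with
  | none => rw [M.lam_top q i hq]; trivial
  | some p =>
    have h1 : ∃ oc : ℕ → O → Bool, oc 0 = o0 ∧
        M''.Sat r (fun n => Nat.casesOn n i (fun _ _ => true)) oc := by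
      cases hr : M''.delta r i with
      | none => exact ⟨fun _ => o0, rfl, sat_of_none hr⟩
      | some p'' =>
        obtain ⟨ot, hot⟩ := beh_nonempty M'' p'' (fun _ _ => true)
        exact ⟨fun n => Nat.casesOn n o0 ot, rfl, sat_cons hr h0 hot⟩
    obtain ⟨oc, hoc0, hsat⟩ := h1
    have h2 := (sat_step_some hq (hs _ hsat)).1
    rw [hoc0] at h2
    exact h2

end IGMM

/-- Theorem 1: if every state of `M` is reachable from `q_init`
and `S` is of minimal cardinality among closed covers of `M` all of whose
members have nonempty output, then any machine `M'` built on the classes of `S`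
as described is a specialization of `M` of minimal size: it is a specialization
of `M`, and every IGMM over `I` and `O` that is a specialization of `M` has at
least `|S|` states. -/
theorem minimal_class_machine {I O Q : Type*}
    [Fintype I] [Fintype O] [Fintype Q]
    (M : IGMM I O Q)
    (hreach : ∀ q : Q, M.Reaches M.init q)
    (S : Set (Set Q))
    (hcov : M.Covers S) (hclosed : M.SuccClosed S)
    (hne : ∀ C ∈ S, M.NonemptyOutput C)
    (hmin : ∀ T : Set (Set Q), M.Covers T → M.SuccClosed T →
        (∀ C ∈ T, M.NonemptyOutput C) → S.ncard ≤ T.ncard)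
    (M' : IGMM I O {C : Set Q // C ∈ S})
    (hinit : M.init ∈ M'.init.1)
    (hdelta_pos : ∀ (C : {C : Set Q // C ∈ S}) (i : I → Bool),
        (M.Succ C.1 i).Nonempty →
        ∃ Ck : {C : Set Q // C ∈ S}, M'.delta C i = some Ck ∧ M.Succ C.1 i ⊆ Ck.1)
    (hdelta_neg : ∀ (C : {C : Set Q // C ∈ S}) (i : I → Bool),
        M.Succ C.1 i = ∅ → M'.delta C i = none)
    (hlam_pos : ∀ (C : {C : Set Q // C ∈ S}) (i : I → Bool),
        (M.Succ C.1 i).Nonempty → M'.lam C i = M.Out C.1 i)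
    (hlam_neg : ∀ (C : {C : Set Q // C ∈ S}) (i : I → Bool),
        M.Succ C.1 i = ∅ → M'.lam C i = Set.univ) :
    IGMM.Specializes M' M'.init M M.init ∧
    ∀ (Q'' : Type*) [Fintype Q''] (M'' : IGMM I O Q''),
        IGMM.Specializes M'' M''.init M M.init → S.ncard ≤ Fintype.card Q'' := by
  classical
  constructor
  · -- Part 1: M' is a specialization of M
    have key : ∀ (q : Q) (Cs : ℕ → {C : Set Q // C ∈ S}) (W : ℕ → Prop)
        (ι : ℕ → I → Bool) (o : ℕ → O → Bool),
        q ∈ (Cs 0).1 →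
        (∀ j, W j → M'.delta (Cs j) (ι j) = some (Cs (j + 1)) ∧
          o j ∈ M'.lam (Cs j) (ι j)) →
        (∀ j, ¬ W j → (∀ j' < j, W j') → M'.delta (Cs j) (ι j) = none) →
        M.Sat q ι o := by
      intro q Cs W ι o hq hrun hend
      have haveA : ∀ j, (∀ j' ≤ j, (M.delta (M.grun q ι j') (ι j')).isSome) →
          M.grun q ι j ∈ (Cs j).1 ∧ ∀ j' ≤ j, W j' := by
        intro j
        induction j with
        | zero =>
          intro hj
          have hW0 : W 0 := by
            by_contra hW
            have h0 := hend 0 hW (fun j' hj' => absurd hj' (Nat.not_lt_zero j'))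
            obtain ⟨p, hp⟩ := Option.isSome_iff_exists.mp (hj 0 le_rfl)
            obtain ⟨Ck, hCk, _⟩ := hdelta_pos (Cs 0) (ι 0) ⟨p, q, hq, hp⟩
            rw [h0] at hCk
            exact nomatch hCk
          exact ⟨hq, fun j' hj' => by rw [Nat.le_zero.mp hj']; exact hW0⟩
        | succ j ih =>
          intro hj
          obtain ⟨hmem, hW⟩ := ih (fun j' hj' => hj j' (le_trans hj' (Nat.le_succ j)))
          obtain ⟨p, hp⟩ := Option.isSome_iff_exists.mp (hj j (Nat.le_succ j))
          have hSucc : (M.Succ (Cs j).1 (ι j)).Nonempty :=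
            ⟨p, M.grun q ι j, hmem, hp⟩
          obtain ⟨Ck, hCk, hsub⟩ := hdelta_pos (Cs j) (ι j) hSucc
          have hdj := (hrun j (hW j le_rfl)).1
          have hCk' : Ck = Cs (j + 1) := Option.some_inj.mp (hCk.symm.trans hdj)
          have hgr : M.grun q ι (j + 1) = p := by
            show (M.delta (M.grun q ι j) (ι j)).getD (M.grun q ι j) = p
            rw [hp]; rfl
          have hmem' : M.grun q ι (j + 1) ∈ (Cs (j + 1)).1 := by
            rw [hgr, ← hCk']
            exact hsub ⟨M.grun q ι j, hmem, hp⟩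
          have hWs : W (j + 1) := by
            by_contra hW1
            have hnone := hend (j + 1) hW1 (fun j' hj' => hW j' (Nat.lt_succ_iff.mp hj'))
            obtain ⟨p', hp'⟩ := Option.isSome_iff_exists.mp (hj (j + 1) le_rfl)
            obtain ⟨Ck', hCk2, _⟩ := hdelta_pos (Cs (j + 1)) (ι (j + 1))
              ⟨p', M.grun q ι (j + 1), hmem', hp'⟩
            rw [hnone] at hCk2
            exact nomatch hCk2
          refine ⟨hmem', fun j' hj' => ?_⟩
          rcases Nat.lt_succ_iff_lt_or_eq.mp (Nat.lt_succ_of_le hj') with h | h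
          · exact hW j' (Nat.lt_succ_iff.mp h)
          · rw [h]; exact hWs
      refine M.sat_of_greedy q ι o (fun j hj => ?_)
      obtain ⟨hmem, hW⟩ := haveA j hj
      obtain ⟨p, hp⟩ := Option.isSome_iff_exists.mp (hj j le_rfl)
      have hSucc : (M.Succ (Cs j).1 (ι j)).Nonempty := ⟨p, M.grun q ι j, hmem, hp⟩
      have hoj := (hrun j (hW j le_rfl)).2
      rw [hlam_pos (Cs j) (ι j) hSucc] at hoj
      have := Set.mem_iInter₂.mp hoj (M.grun q ι j) hmem
      exact this
    intro ι o ho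
    rcases ho with ⟨Cs, h0, hrun⟩ | ⟨k, Cs, h0, hrun, hend⟩
    · exact key M.init Cs (fun _ => True) ι o (by rw [h0]; exact hinit)
        (fun j _ => hrun j) (fun j hj _ => absurd trivial hj)
    · refine key M.init Cs (fun j => j < k) ι o (by rw [h0]; exact hinit)
        hrun (fun j hj hj' => ?_)
      have hjk : j = k := by
        rcases Nat.lt_or_ge k j with h | h
        · exact absurd (hj' k h) (lt_irrefl k)
        · omega
      rw [hjk]; exact hend
  · -- Part 2: minimality
    intro Q'' _inst M'' hspec
    set Cl : Q'' → Set Q :=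
      fun r => {q | M''.Specializes r M q ∨ ∀ ι o, M.Sat q ι o} with hCl
    have hcovT : ∀ q : Q, ∃ r : Q'', q ∈ Cl r := by
      intro q
      have h := hreach q
      induction h with
      | refl => exact ⟨M''.init, Or.inl hspec⟩
      | tail hab hbc ih =>
        obtain ⟨i, hi⟩ := hbc
        obtain ⟨r, hr | hu⟩ := ih
        · cases hdr : M''.delta r i with
          | some p'' => exact ⟨p'', Or.inl (IGMM.spec_step hr hi hdr)⟩
          | none => exact ⟨M''.init, Or.inr (IGMM.spec_none hr hi hdr)⟩
        · exact ⟨r, Or.inr (IGMM.univ_step hu hi)⟩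
    have h1 : M.Covers (Set.range Cl) := by
      intro q
      obtain ⟨r, hr⟩ := hcovT q
      exact ⟨Cl r, ⟨r, rfl⟩, hr⟩
    have h2 : M.SuccClosed (Set.range Cl) := by
      rintro C ⟨r, rfl⟩ i
      cases hdr : M''.delta r i with
      | some p'' =>
        refine ⟨Cl p'', ⟨p'', rfl⟩, ?_⟩
        rintro x ⟨q, hq, hqx⟩
        rcases hq with hsr | hu
        · exact Or.inl (IGMM.spec_step hsr hqx hdr)
        · exact Or.inr (IGMM.univ_step hu hqx)
      | none =>
        refine ⟨Cl M''.init, ⟨M''.init, rfl⟩, ?_⟩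
        rintro x ⟨q, hq, hqx⟩
        rcases hq with hsr | hu
        · exact Or.inr (IGMM.spec_none hsr hqx hdr)
        · exact Or.inr (IGMM.univ_step hu hqx)
    have h3 : ∀ C ∈ Set.range Cl, M.NonemptyOutput C := by
      rintro C ⟨r, rfl⟩ i
      obtain ⟨o0, ho0⟩ := M''.lam_nonempty r i
      refine ⟨o0, Set.mem_iInter₂.mpr (fun q hq => ?_)⟩
      rcases hq with hsr | hu
      · exact IGMM.spec_lam hsr ho0
      · exact IGMM.univ_lam hu
    calc S.ncard ≤ (Set.range Cl).ncard := hmin _ h1 h2 h3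
      _ ≤ Fintype.card Q'' := by
        rw [← Set.image_univ]
        calc (Cl '' Set.univ).ncard ≤ (Set.univ : Set Q'').ncard :=
              Set.ncard_image_le Set.finite_univ
          _ = Fintype.card Q'' := by rw [Set.ncard_univ, Nat.card_eq_fintype_card]
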